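/- Suppose the interval LP is unique B-stable with basis β. Then the set of all optimal solutions over all scenarios in standard form is exactly the polyhedron described by the basis: ⋃ b ∈ Set.Icc bl bu, OptStd b = {x̃ : Fin n ⊕ Fin m → ℝ | 0 ≤ x̃ ∧ (∀ j ∉ Set.range β, x̃ j = 0) ∧ bl ≤ Ãβ.mulVec (fun i => x̃ (β i)) ∧ Ãβ.mulVec (fun i => x̃ (β i)) ≤ bu}. -/

import Mathlib

open Matrix

/-- Standard-form coefficient matrix with appended slack variables. -/
def Atil {m n : ℕ} (A : Matrix (Fin m) (Fin n) ℝ) :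
    Matrix (Fin m) (Fin n ⊕ Fin m) ℝ :=
  Matrix.fromCols A 1

/-- Standard-form feasible set: `Ã x̃ = b`, `x̃ ≥ 0`. -/
def FeasStd {m n : ℕ} (A : Matrix (Fin m) (Fin n) ℝ) (b : Fin m → ℝ) :
    Set (Fin n ⊕ Fin m → ℝ) :=
  {xt | (Atil A).mulVec xt = b ∧ 0 ≤ xt}

/-- Standard-form optimal set for the objective `c̃ = Sum.elim c 0`. -/
def OptStd {m n : ℕ} (A : Matrix (Fin m) (Fin n) ℝ) (c : Fin n → ℝ)
    (b : Fin m → ℝ) : Set (Fin n ⊕ Fin m → ℝ) :=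
  {xt ∈ FeasStd A b |
    ∀ yt ∈ FeasStd A b, Sum.elim c 0 ⬝ᵥ xt ≤ Sum.elim c 0 ⬝ᵥ yt}

theorem unique_B_stable_optimal_set_description
    (m n : ℕ) (A : Matrix (Fin m) (Fin n) ℝ) (c : Fin n → ℝ)
    (bl bu : Fin m → ℝ) (hb : bl ≤ bu)
    (β : Fin m → Fin n ⊕ Fin m) (hβinj : Function.Injective β)
    (hβinv : IsUnit ((Atil A).submatrix id β).det)
    (xβ : (Fin m → ℝ) → (Fin n ⊕ Fin m → ℝ))
    (hxβ_basic : ∀ b : Fin m → ℝ, ∀ i : Fin m,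
      xβ b (β i) = (((Atil A).submatrix id β)⁻¹.mulVec b) i)
    (hxβ_nonbasic : ∀ b : Fin m → ℝ, ∀ j : Fin n ⊕ Fin m,
      j ∉ Set.range β → xβ b j = 0)
    (hBstable : ∀ b ∈ Set.Icc bl bu, OptStd A c b = {xβ b}) :
    (⋃ b ∈ Set.Icc bl bu, OptStd A c b) =
      {xt : Fin n ⊕ Fin m → ℝ | 0 ≤ xt ∧
        (∀ j ∉ Set.range β, xt j = 0) ∧
        bl ≤ ((Atil A).submatrix id β).mulVec (fun i => xt (β i)) ∧
        ((Atil A).submatrix id β).mulVec (fun i => xt (β i)) ≤ bu} := by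

  ext x
  set B := (Atil A).submatrix id β with hB
  have hinv : B⁻¹ * B = 1 := Matrix.nonsing_inv_mul B hβinv
  have hinv2 : B * B⁻¹ = 1 := Matrix.mul_nonsing_inv B hβinv
  simp only [Set.mem_iUnion, Set.mem_setOf_eq]
  constructor
  · rintro ⟨b, hbIcc, hx⟩
    have hx' : x = xβ b := by
      have := hBstable b hbIcc
      rw [this] at hx; exact hx
    have hfeas : x ∈ FeasStd A b := by
      rw [hBstable b hbIcc] at hx
      rw [hx']
      have : xβ b ∈ OptStd A c b := by rw [hBstable b hbIcc]; rfl
      exact this.1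
    refine ⟨hfeas.2, ?_, ?_⟩
    · intro j hj; rw [hx']; exact hxβ_nonbasic b j hj
    · have hbv : B.mulVec (fun i => x (β i)) = b := by
        have : (fun i => x (β i)) = B⁻¹.mulVec b := by
          funext i; rw [hx']; exact hxβ_basic b i
        rw [this, Matrix.mulVec_mulVec, hinv2, Matrix.one_mulVec]
      rw [hbv]; exact ⟨hbIcc.1, hbIcc.2⟩
  · rintro ⟨hx0, hxz, hl, hu⟩
    set b := B.mulVec (fun i => x (β i)) with hbdef
    have hbIcc : b ∈ Set.Icc bl bu := ⟨hl, hu⟩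
    refine ⟨b, hbIcc, ?_⟩
    rw [hBstable b hbIcc]
    have : x = xβ b := by
      funext j
      by_cases hj : j ∈ Set.range β
      · obtain ⟨i, rfl⟩ := hj
        rw [hxβ_basic b i, hbdef, Matrix.mulVec_mulVec, hinv, Matrix.one_mulVec]
      · rw [hxz j hj, hxβ_nonbasic b j hj]
    rw [this]; rfl
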